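/- arXiv:1507.06066 — 3 statements merged into one kernel-verified Lean document; each statement's English description precedes it below -/
import Mathlib

section
/- Suppose a : ℕ → ℂ satisfies ∑_{p ≤ u, p prime} |a(p)| = κ·u/log u + O(u/(log u)²) as u → ∞, for some κ > 0. Then for σ > 1 with σ - 1 = O(1/log x), ∑_{p ≤ x, p prime} |a(p)|/p^σ = κ·li(x^{1-σ}) - κ·li(2^{1-σ}) + O(1), where li denotes the logarithmic integral. -/
open Filter

/-- The logarithmic integral `li ξ = ∫₀^ξ dt / log t` (for `0 < ξ < 1` this is a
proper convergent integral, which is the only case in which we use it). -/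
noncomputable def li (ξ : ℝ) : ℝ := ∫ t in Set.Ioo (0 : ℝ) ξ, 1 / Real.log t

section AuxiliaryLemmas

open MeasureTheory Set intervalIntegral

lemma integrableOn_one_div_log {q : ℝ} (hq0 : 0 < q) (hq1 : q < 1) :
    IntegrableOn (fun t : ℝ => 1 / Real.log t) (Set.Ioo 0 q) := by
  apply Measure.integrableOn_of_bounded (M := (-Real.log q)⁻¹)
  · simp [Real.volume_Ioo]
  · exact (Real.measurable_log.inv.aestronglyMeasurable).congr
      (by filter_upwards with t using (one_div _).symm)
  · rw [ae_restrict_iff' measurableSet_Ioo]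
    filter_upwards with t ht
    have hlt : Real.log t < Real.log q := Real.log_lt_log ht.1 ht.2
    have hq : Real.log q < 0 := Real.log_neg hq0 hq1
    rw [Real.norm_eq_abs, one_div, abs_inv, abs_of_neg (hlt.trans hq)]
    exact inv_anti₀ (by linarith) (by linarith)

lemma li_sub_li {p q : ℝ} (hp : 0 < p) (hpq : p ≤ q) (hq : q < 1) :
    li q - li p = ∫ t in p..q, 1 / Real.log t := by
  have hq0 : 0 < q := lt_of_lt_of_le hp hpq
  have hint := integrableOn_one_div_log hq0 hq
  have h1 : IntegrableOn (fun t : ℝ => 1 / Real.log t) (Set.Ioo 0 p) :=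
    hint.mono_set (Set.Ioo_subset_Ioo_right hpq)
  have h2 : IntegrableOn (fun t : ℝ => 1 / Real.log t) (Set.Ico p q) :=
    hint.mono_set (fun t ht => ⟨lt_of_lt_of_le hp ht.1, ht.2⟩)
  have hu : Set.Ioo (0:ℝ) q = Set.Ioo 0 p ∪ Set.Ico p q :=
    (Set.Ioo_union_Ico_eq_Ioo hp hpq).symm
  have hdisj : Disjoint (Set.Ioo (0:ℝ) p) (Set.Ico p q) :=
    (Set.Iio_disjoint_Ici le_rfl).mono Set.Ioo_subset_Iio_self Set.Ico_subset_Ici_self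
  have : li q = li p + ∫ t in Set.Ico p q, 1 / Real.log t := by
    rw [li, hu, setIntegral_union hdisj measurableSet_Ico h1 h2]; rfl
  rw [this, setIntegral_congr_set Ico_ae_eq_Ioc, ← intervalIntegral.integral_of_le hpq]
  ring

lemma integral_rpow_div_log {x σ : ℝ} (hx : 2 ≤ x) (hσ : 1 < σ) :
    ∫ t in (2:ℝ)..x, t ^ (-σ) / Real.log t = li (x ^ (1-σ)) - li (2 ^ (1-σ)) := by
  have h1σ : 1 - σ < 0 := by linarith
  have key : ∫ t in (2:ℝ)..x, (fun t : ℝ => (1-σ) * t ^ (1-σ-1)) t •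
      (fun u : ℝ => 1 / Real.log u) ((fun t : ℝ => t ^ (1-σ)) t) =
      ∫ u in ((2:ℝ) ^ (1-σ))..(x ^ (1-σ)), 1 / Real.log u := by
    refine intervalIntegral.integral_comp_smul_deriv' (f := fun t : ℝ => t ^ (1-σ))
      (f' := fun t : ℝ => (1-σ) * t ^ (1-σ-1)) (g := fun u : ℝ => 1 / Real.log u) ?_ ?_ ?_
    · intro t ht
      rw [Set.uIcc_of_le hx] at ht
      exact Real.hasDerivAt_rpow_const (Or.inl (by linarith [ht.1] : t ≠ 0))
    · intro t ht
      rw [Set.uIcc_of_le hx] at ht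
      exact (continuousAt_const.mul (Real.continuousAt_rpow_const t _
        (Or.inl (by linarith [ht.1] : t ≠ 0)))).continuousWithinAt
    · intro u hu
      rw [Set.uIcc_of_le hx] at hu
      obtain ⟨t, ht, rfl⟩ := hu
      have ht0 : (0:ℝ) < t := by linarith [ht.1]
      have hu0 : (0:ℝ) < t ^ (1-σ) := Real.rpow_pos_of_pos ht0 _
      have hu1 : t ^ (1-σ) < 1 :=
        Real.rpow_lt_one_of_one_lt_of_neg (by linarith [ht.1]) h1σ
      have hlog : Real.log (t ^ (1-σ)) ≠ 0 :=
        ne_of_lt (Real.log_neg hu0 hu1)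
      exact (continuousAt_const.div (Real.continuousAt_log (ne_of_gt hu0)) hlog).continuousWithinAt
  have heq : Set.EqOn (fun t : ℝ => t ^ (-σ) / Real.log t)
      (fun t : ℝ => (fun t : ℝ => (1-σ) * t ^ (1-σ-1)) t •
        (fun u : ℝ => 1 / Real.log u) ((fun t : ℝ => t ^ (1-σ)) t)) (Set.uIcc 2 x) := by
    intro t ht
    rw [Set.uIcc_of_le hx] at ht
    have ht0 : (0:ℝ) < t := by linarith [ht.1]
    have hlt : Real.log t ≠ 0 := ne_of_gt (Real.log_pos (by linarith [ht.1]))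
    simp only [smul_eq_mul]
    have h1σ' : (1:ℝ) - σ ≠ 0 := ne_of_lt h1σ
    rw [show (1 - σ - 1) = -σ by ring, Real.log_rpow ht0]
    field_simp
  rw [intervalIntegral.integral_congr heq, key]
  have hp0 : (0:ℝ) < x ^ (1-σ) := Real.rpow_pos_of_pos (by linarith) _
  have hple : x ^ (1-σ) ≤ 2 ^ (1-σ) :=
    Real.rpow_le_rpow_of_nonpos two_pos hx (le_of_lt h1σ)
  have hqlt : (2:ℝ) ^ (1-σ) < 1 := Real.rpow_lt_one_of_one_lt_of_neg one_lt_two h1σ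
  rw [intervalIntegral.integral_symm, ← li_sub_li hp0 hple hqlt]
  ring

lemma contOn_inv_mul_log_sq {x : ℝ} (hx : 2 ≤ x) :
    ContinuousOn (fun t : ℝ => 1 / (t * Real.log t ^ 2)) (Set.Icc 2 x) := by
  apply continuousOn_const.div
  · exact continuousOn_id.mul ((Real.continuousOn_log.mono
      (fun t ht => by simp only [Set.mem_compl_iff, Set.mem_singleton_iff]
                      exact ne_of_gt (by linarith [ht.1] : (0:ℝ) < t))).pow 2)
  · intro t ht
    have h2 : (0:ℝ) < Real.log t := Real.log_pos (by linarith [ht.1])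
    have h1 : (0:ℝ) < t := by linarith [ht.1]
    positivity
lemma integral_inv_mul_log_sq {x : ℝ} (hx : 2 ≤ x) :
    ∫ t in (2:ℝ)..x, 1 / (t * Real.log t ^ 2) = (Real.log 2)⁻¹ - (Real.log x)⁻¹ := by
  have : ∀ t ∈ Set.uIcc (2:ℝ) x, HasDerivAt (fun s : ℝ => -(Real.log s)⁻¹)
      (1 / (t * Real.log t ^ 2)) t := by
    intro t ht
    rw [Set.uIcc_of_le hx] at ht
    have ht0 : (0:ℝ) < t := by linarith [ht.1]
    have hlt : (0:ℝ) < Real.log t := Real.log_pos (by linarith [ht.1])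
    have h := ((Real.hasDerivAt_log (ne_of_gt ht0)).inv (ne_of_gt hlt)).neg
    refine h.congr_deriv ?_
    rw [neg_div, neg_neg, one_div, mul_inv, div_eq_mul_inv]
  rw [intervalIntegral.integral_eq_sub_of_hasDerivAt this
    (((contOn_inv_mul_log_sq hx).mono (by rw [Set.uIcc_of_le hx])).intervalIntegrable)]
  simp
  ring

set_option maxHeartbeats 1600000 in
theorem sum_primes_rpow_eq_li (a : ℕ → ℂ) (κ : ℝ) (hκ : 0 < κ)
    (C₀ : ℝ)
    (hpnt : ∀ u : ℝ, 2 ≤ u →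
      |(∑ p ∈ (Finset.range (⌊u⌋₊ + 1)).filter Nat.Prime, ‖a p‖)
          - κ * u / Real.log u| ≤ C₀ * u / (Real.log u) ^ 2) :
    ∀ A : ℝ, 0 < A → ∃ C : ℝ, ∀ᶠ x : ℝ in atTop, ∀ σ : ℝ, 1 < σ →
      σ - 1 ≤ A / Real.log x →
      |(∑ p ∈ (Finset.range (⌊x⌋₊ + 1)).filter Nat.Prime,
          ‖a p‖ / (p : ℝ) ^ σ)
        - κ * li (x ^ (1 - σ)) + κ * li (2 ^ (1 - σ))| ≤ C := by
  intro A hA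
  set c : ℕ → ℝ := fun k => if Nat.Prime k then ‖a k‖ else 0 with hc
  set S : ℝ → ℝ := fun t => ∑ k ∈ Finset.Icc 0 ⌊t⌋₊, c k with hSdef
  have hS_def : ∀ t : ℝ, (∑ k ∈ Finset.Icc 0 ⌊t⌋₊, c k) = S t := fun t => rfl
  have hc_nonneg : ∀ k, 0 ≤ c k := by
    intro k; rw [hc]; dsimp only; split
    · exact norm_nonneg _
    · exact le_refl 0
  have hS_mono : Monotone S := by
    intro s t hst
    exact Finset.sum_le_sum_of_subset_of_nonneg
      (Finset.Icc_subset_Icc le_rfl (Nat.floor_le_floor hst)) (fun k _ _ => hc_nonneg k)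
  have hS_nonneg : ∀ t, 0 ≤ S t := fun t => Finset.sum_nonneg fun k _ => hc_nonneg k
  have hS_lt2 : ∀ t : ℝ, t < 2 → S t = 0 := by
    intro t ht
    refine Finset.sum_eq_zero fun k hk => ?_
    simp only [Finset.mem_Icc] at hk
    have h1 : ⌊t⌋₊ ≤ 1 := by
      rcases le_or_gt 0 t with h0 | h0
      · have : ⌊t⌋₊ < 2 := (Nat.floor_lt h0).mpr (by exact_mod_cast ht)
        omega
      · simp [Nat.floor_of_nonpos (le_of_lt h0)]
    have : k = 0 ∨ k = 1 := by omega
    rcases this with rfl | rfl <;> simp [hc, Nat.not_prime_zero, Nat.not_prime_one]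
  have hS_eq : ∀ u : ℝ, (∑ p ∈ (Finset.range (⌊u⌋₊ + 1)).filter Nat.Prime,
      ‖a p‖) = S u := by
    intro u
    rw [Finset.sum_filter, ← hS_def]
    apply Finset.sum_congr
    · ext k; simp [Nat.lt_succ_iff]
    · intro k _; rfl
  have hpnt' : ∀ u : ℝ, 2 ≤ u → |S u - κ * u / Real.log u| ≤ C₀ * u / Real.log u ^ 2 :=
    fun u hu => by rw [← hS_eq]; exact hpnt u hu
  have hlog2 : (0:ℝ) < Real.log 2 := Real.log_pos one_lt_two
  have hC₀ : 0 ≤ C₀ := by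
    have h := (abs_nonneg _).trans (hpnt' 2 le_rfl)
    rw [le_div_iff₀ (by positivity)] at h
    nlinarith [hlog2]
  refine ⟨κ / Real.log 2 + C₀ / Real.log 2 ^ 2 + 2 * C₀ / Real.log 2 + A * κ / Real.log 2, ?_⟩
  filter_upwards [eventually_ge_atTop (3:ℝ),
    Real.tendsto_log_atTop.eventually_ge_atTop A] with x hx3 hlogA
  intro σ hσ hσA
  have hx2 : (2:ℝ) ≤ x := by linarith
  have hx0 : (0:ℝ) < x := by linarith
  have hlogx : Real.log 2 ≤ Real.log x := Real.log_le_log (by norm_num) hx2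
  have hlogx0 : 0 < Real.log x := lt_of_lt_of_le hlog2 hlogx
  have hσ1 : 0 ≤ σ - 1 := by linarith
  have hσ2 : σ ≤ 2 := by
    have h1 : A / Real.log x ≤ 1 := by
      rw [div_le_one hlogx0]; exact hlogA
    linarith
  set f : ℝ → ℝ := fun t => t ^ (-σ) with hf
  have hderiv : ∀ t : ℝ, t ≠ 0 → deriv f t = -σ * t ^ (-σ - 1) := fun t ht =>
    Real.deriv_rpow_const t (-σ)
  have hdiff : ∀ t ∈ Set.Icc (3/2:ℝ) x, DifferentiableAt ℝ f t := fun t ht =>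
    (Real.hasDerivAt_rpow_const (p := -σ)
      (Or.inl (ne_of_gt (show (0:ℝ) < t by linarith [ht.1])))).differentiableAt
  have hint : IntegrableOn (deriv f) (Set.Icc (3/2:ℝ) x) := by
    have hcont : ContinuousOn (fun t : ℝ => -σ * t ^ (-σ - 1)) (Set.Icc (3/2:ℝ) x) :=
      continuousOn_const.mul (fun t ht => (Real.continuousAt_rpow_const t _
        (Or.inl (ne_of_gt (show (0:ℝ) < t by linarith [ht.1])))).continuousWithinAt)
    exact (hcont.integrableOn_Icc).congr_fun
      (fun t ht => (hderiv t (ne_of_gt (by linarith [ht.1]))).symm) measurableSet_Icc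
  have habel := sum_mul_eq_sub_sub_integral_mul (f := f) c
    (by norm_num : (0:ℝ) ≤ 3/2) (by linarith : (3/2:ℝ) ≤ x) hdiff hint
  have hfloor32 : ⌊(3/2:ℝ)⌋₊ = 1 := by
    rw [Nat.floor_eq_iff (by norm_num)]; norm_num
  simp_rw [hS_def] at habel
  rw [hfloor32] at habel
  have hptwise : ∀ k : ℕ, (if Nat.Prime k then ‖a k‖ / (k:ℝ) ^ σ else 0)
      = f k * c k := by
    intro k
    by_cases hk : Nat.Prime k
    · simp only [hc, hf, if_pos hk]
      rw [Real.rpow_neg (Nat.cast_nonneg k)]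
      ring
    · simp [hc, hf, hk]
  have hT : (∑ p ∈ (Finset.range (⌊x⌋₊ + 1)).filter Nat.Prime,
      ‖a p‖ / (p:ℝ) ^ σ) = ∑ k ∈ Finset.Ioc 1 ⌊x⌋₊, f k * c k := by
    rw [Finset.sum_filter,
      show Finset.range (⌊x⌋₊ + 1) = Finset.Icc 0 ⌊x⌋₊ by ext k; simp [Nat.lt_succ_iff],
      Finset.sum_congr rfl (fun k _ => hptwise k)]
    symm
    apply Finset.sum_subset
    · intro k hk; simp only [Finset.mem_Ioc, Finset.mem_Icc] at hk ⊢; omega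
    · intro k hk hk'
      simp only [Finset.mem_Icc, Finset.mem_Ioc] at hk hk'
      have : k = 0 ∨ k = 1 := by omega
      rcases this with rfl | rfl <;>
        simp [hc, Nat.not_prime_zero, Nat.not_prime_one]
  -- integrability of the Abel integrand
  have hSmeas : Measurable S := hS_mono.measurable
  have hhmeas : AEStronglyMeasurable (fun t => deriv f t * S t) volume :=
    ((measurable_deriv f).mul hSmeas).aestronglyMeasurable
  have hh_int : IntegrableOn (fun t => deriv f t * S t) (Set.Icc (3/2:ℝ) x) := by
    apply Measure.integrableOn_of_bounded (M := σ * S x) measure_Icc_lt_top.ne hhmeas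
    rw [ae_restrict_iff' measurableSet_Icc]
    filter_upwards with t ht
    have ht0 : (0:ℝ) < t := by linarith [ht.1]
    have h1 : |deriv f t| ≤ σ := by
      rw [hderiv t (ne_of_gt ht0), abs_mul, abs_neg, abs_of_pos (by linarith : (0:ℝ) < σ),
        abs_of_pos (Real.rpow_pos_of_pos ht0 _)]
      have h2 : t ^ (-σ - 1) ≤ 1 :=
        Real.rpow_le_one_of_one_le_of_nonpos (by linarith [ht.1]) (by linarith)
      nlinarith
    rw [Real.norm_eq_abs, abs_mul, abs_of_nonneg (hS_nonneg t)]
    exact mul_le_mul h1 (hS_mono ht.2) (hS_nonneg t) (by linarith)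
  have hh_int' : IntegrableOn (fun t => deriv f t * S t) (Set.Ioc (2:ℝ) x) :=
    hh_int.mono_set (fun t ht => ⟨by linarith [ht.1], ht.2⟩)
  have hh_int'' : IntegrableOn (fun t => deriv f t * S t) (Set.Ioc (3/2:ℝ) 2) :=
    hh_int.mono_set (fun t ht => ⟨le_of_lt ht.1, by linarith [ht.2]⟩)
  have hzero : ∫ t in Set.Ioc (3/2:ℝ) 2, deriv f t * S t = 0 := by
    rw [← setIntegral_congr_set Ioo_ae_eq_Ioc]
    apply setIntegral_eq_zero_of_forall_eq_zero
    intro t ht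
    rw [hS_lt2 t ht.2, mul_zero]
  have hsplit : ∫ t in Set.Ioc (3/2:ℝ) x, deriv f t * S t
      = ∫ t in Set.Ioc (2:ℝ) x, deriv f t * S t := by
    rw [← Set.Ioc_union_Ioc_eq_Ioc (by norm_num : (3/2:ℝ) ≤ 2) hx2,
      setIntegral_union (Set.Ioc_disjoint_Ioc_of_le le_rfl) measurableSet_Ioc hh_int'' hh_int',
      hzero, zero_add]
  -- the main-term integrand
  set G : ℝ → ℝ := fun t => κ * (t ^ (-σ) / Real.log t) with hG
  have hGcont : ContinuousOn G (Set.Icc (2:ℝ) x) := by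
    apply continuousOn_const.mul
    apply ContinuousOn.div
    · exact fun t ht => (Real.continuousAt_rpow_const t _
        (Or.inl (ne_of_gt (show (0:ℝ) < t by linarith [ht.1])))).continuousWithinAt
    · exact Real.continuousOn_log.mono
        (fun t ht => ne_of_gt (show (0:ℝ) < t by linarith [ht.1]))
    · exact fun t ht => ne_of_gt (Real.log_pos (by linarith [ht.1]))
  have hGint : IntegrableOn G (Set.Ioc (2:ℝ) x) :=
    (hGcont.integrableOn_Icc).mono_set Set.Ioc_subset_Icc_self
  have hIκ : ∫ t in Set.Ioc (2:ℝ) x, G t = κ * (li (x ^ (1-σ)) - li (2 ^ (1-σ))) := by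
    rw [hG]
    simp only
    rw [MeasureTheory.integral_const_mul, ← intervalIntegral.integral_of_le hx2,
      integral_rpow_div_log hx2 hσ]
  have key : (∑ p ∈ (Finset.range (⌊x⌋₊ + 1)).filter Nat.Prime,
        ‖a p‖ / (p:ℝ) ^ σ) - κ * li (x ^ (1 - σ)) + κ * li (2 ^ (1 - σ))
      = f x * S x + ∫ t in Set.Ioc (2:ℝ) x, (-(deriv f t * S t) - G t) := by
    have h1 : IntegrableOn (fun t => -(deriv f t * S t)) (Set.Ioc (2:ℝ) x) := hh_int'.neg
    rw [integral_sub h1 hGint, MeasureTheory.integral_neg, hIκ, hT, habel,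
      hS_lt2 (3/2) (by norm_num), hsplit]
    ring
  rw [key]
  -- bound on the boundary term
  have hB1 : |f x * S x| ≤ κ / Real.log 2 + C₀ / Real.log 2 ^ 2 := by
    have hfx : 0 < f x := Real.rpow_pos_of_pos hx0 _
    have hSx : S x ≤ κ * x / Real.log x + C₀ * x / Real.log x ^ 2 := by
      have := (abs_le.mp (hpnt' x hx2)).2; linarith
    have hfx1 : f x ≤ x⁻¹ := by
      rw [hf]
      calc x ^ (-σ) ≤ x ^ (-1:ℝ) :=
            Real.rpow_le_rpow_of_exponent_le (by linarith) (by linarith)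
        _ = x⁻¹ := Real.rpow_neg_one x
    rw [abs_of_nonneg (mul_nonneg hfx.le (hS_nonneg x))]
    have hxne : x ≠ 0 := ne_of_gt hx0
    have hlne : Real.log x ≠ 0 := ne_of_gt hlogx0
    calc f x * S x ≤ x⁻¹ * (κ * x / Real.log x + C₀ * x / Real.log x ^ 2) := by
          apply mul_le_mul hfx1 hSx (hS_nonneg x) (by positivity)
      _ = κ / Real.log x + C₀ / Real.log x ^ 2 := by field_simp
      _ ≤ κ / Real.log 2 + C₀ / Real.log 2 ^ 2 := by gcongr <;> linarith
  -- bound on the integral term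
  set g : ℝ → ℝ := fun t => 2 * C₀ * (1 / (t * Real.log t ^ 2))
      + ((σ - 1) * κ / Real.log 2) * (1 / t) with hg
  have hgcont : ContinuousOn g (Set.Icc (2:ℝ) x) := by
    apply ContinuousOn.add
    · exact continuousOn_const.mul (contOn_inv_mul_log_sq hx2)
    · exact continuousOn_const.mul (continuousOn_const.div continuousOn_id
        (fun t ht => ne_of_gt (show (0:ℝ) < t by linarith [ht.1])))
  have hgint : IntegrableOn g (Set.Ioc (2:ℝ) x) :=
    hgcont.integrableOn_Icc.mono_set Set.Ioc_subset_Icc_self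
  have hbound : ∀ t ∈ Set.Ioc (2:ℝ) x, ‖-(deriv f t * S t) - G t‖ ≤ g t := by
    intro t ht
    have ht2 : (2:ℝ) < t := ht.1
    have ht0 : (0:ℝ) < t := by linarith
    have ht1 : (1:ℝ) ≤ t := by linarith
    have hL : Real.log 2 ≤ Real.log t := Real.log_le_log (by norm_num) (le_of_lt ht2)
    have hL0 : 0 < Real.log t := lt_of_lt_of_le hlog2 hL
    have hLne : Real.log t ≠ 0 := ne_of_gt hL0
    have hv : t ^ (-σ - 1) * t = t ^ (-σ) := by
      have hv0 := (Real.rpow_add_one (ne_of_gt ht0) (-σ - 1)).symm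
      rw [show (-σ - 1 + 1 : ℝ) = -σ by ring] at hv0
      exact hv0
    have hu_pos : 0 < t ^ (-σ) := Real.rpow_pos_of_pos ht0 _
    have hv_pos : 0 < t ^ (-σ - 1) := Real.rpow_pos_of_pos ht0 _
    have hu_le : t ^ (-σ) ≤ 1 / t := by
      rw [one_div, ← Real.rpow_neg_one t]
      exact Real.rpow_le_rpow_of_exponent_le ht1 (by linarith)
    have hE := hpnt' t (le_of_lt ht2)
    rw [Real.norm_eq_abs, hderiv t (ne_of_gt ht0), hG]
    simp only
    have hre : -(-σ * t ^ (-σ - 1) * S t) - κ * (t ^ (-σ) / Real.log t)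
        = σ * t ^ (-σ - 1) * (S t - κ * t / Real.log t)
          + (σ - 1) * (κ * t ^ (-σ) / Real.log t) := by
      rw [← hv]; ring
    rw [hre]
    have hstep1 : |σ * t ^ (-σ - 1) * (S t - κ * t / Real.log t)|
        ≤ σ * t ^ (-σ - 1) * (C₀ * t / Real.log t ^ 2) := by
      rw [abs_mul, abs_mul, abs_of_pos (by linarith : (0:ℝ) < σ), abs_of_pos hv_pos]
      exact mul_le_mul_of_nonneg_left hE (by positivity)
    have hstep1' : σ * t ^ (-σ - 1) * (C₀ * t / Real.log t ^ 2)
        ≤ 2 * C₀ * (1 / (t * Real.log t ^ 2)) := by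
      have e1 : σ * t ^ (-σ - 1) * (C₀ * t / Real.log t ^ 2)
          = σ * C₀ * (t ^ (-σ)) / Real.log t ^ 2 := by rw [← hv]; ring
      have e2 : 2 * C₀ * (1 / (t * Real.log t ^ 2))
          = 2 * C₀ * (1 / t) / Real.log t ^ 2 := by
        field_simp
      rw [e1, e2]
      rw [div_le_div_iff_of_pos_right (by positivity : (0:ℝ) < Real.log t ^ 2)]
      have hA1 : σ * (C₀ * t ^ (-σ)) ≤ 2 * (C₀ * t ^ (-σ)) :=
        mul_le_mul_of_nonneg_right hσ2 (mul_nonneg hC₀ hu_pos.le)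
      have hA2 : 2 * C₀ * t ^ (-σ) ≤ 2 * C₀ * (1 / t) :=
        mul_le_mul_of_nonneg_left hu_le (by linarith)
      linarith [hA1, hA2]
    have hstep2 : |(σ - 1) * (κ * t ^ (-σ) / Real.log t)|
        ≤ ((σ - 1) * κ / Real.log 2) * (1 / t) := by
      rw [abs_of_nonneg (mul_nonneg hσ1 (by positivity))]
      have h3 : t ^ (-σ) / Real.log t ≤ (1 / t) / Real.log 2 :=
        div_le_div₀ (by positivity) hu_le hlog2 hL
      calc (σ - 1) * (κ * t ^ (-σ) / Real.log t)
          = (σ - 1) * (κ * (t ^ (-σ) / Real.log t)) := by ring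
        _ ≤ (σ - 1) * (κ * ((1 / t) / Real.log 2)) := by
            apply mul_le_mul_of_nonneg_left _ hσ1
            exact mul_le_mul_of_nonneg_left h3 hκ.le
        _ = ((σ - 1) * κ / Real.log 2) * (1 / t) := by ring
    calc |σ * t ^ (-σ - 1) * (S t - κ * t / Real.log t)
          + (σ - 1) * (κ * t ^ (-σ) / Real.log t)|
        ≤ |σ * t ^ (-σ - 1) * (S t - κ * t / Real.log t)|
          + |(σ - 1) * (κ * t ^ (-σ) / Real.log t)| := abs_add_le _ _
      _ ≤ g t := by rw [hg]; dsimp only; linarith [hstep1.trans hstep1', hstep2]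
  have hB2 : |∫ t in Set.Ioc (2:ℝ) x, (-(deriv f t * S t) - G t)|
      ≤ 2 * C₀ / Real.log 2 + A * κ / Real.log 2 := by
    have h1 : |∫ t in Set.Ioc (2:ℝ) x, (-(deriv f t * S t) - G t)|
        ≤ ∫ t in Set.Ioc (2:ℝ) x, g t := by
      rw [← Real.norm_eq_abs]
      apply MeasureTheory.norm_integral_le_of_norm_le hgint
      rw [ae_restrict_iff' measurableSet_Ioc]
      filter_upwards with t ht
      exact hbound t ht
    have h2 : ∫ t in Set.Ioc (2:ℝ) x, g t
        ≤ 2 * C₀ / Real.log 2 + A * κ / Real.log 2 := by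
      simp only [hg]
      rw [← intervalIntegral.integral_of_le hx2]
      have hi1 : IntervalIntegrable (fun t : ℝ => 2 * C₀ * (1 / (t * Real.log t ^ 2)))
          volume 2 x := ((continuousOn_const.mul (contOn_inv_mul_log_sq hx2)).mono
            (by rw [Set.uIcc_of_le hx2])).intervalIntegrable
      have hi2 : IntervalIntegrable (fun t : ℝ => ((σ - 1) * κ / Real.log 2) * (1 / t))
          volume 2 x := ((continuousOn_const.mul (continuousOn_const.div continuousOn_id
            (fun t ht => ne_of_gt (show (0:ℝ) < t by
              rw [Set.uIcc_of_le hx2] at ht; linarith [ht.1])))).intervalIntegrable)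
      rw [intervalIntegral.integral_add hi1 hi2, intervalIntegral.integral_const_mul,
        intervalIntegral.integral_const_mul, integral_inv_mul_log_sq hx2,
        integral_one_div (by rw [Set.uIcc_of_le hx2]; intro h; linarith [h.1])]
      have hσlog : (σ - 1) * Real.log x ≤ A := (le_div_iff₀ hlogx0).mp hσA
      have hlogx2 : Real.log (x / 2) ≤ Real.log x :=
        Real.log_le_log (by positivity) (by linarith)
      have hlogx2' : 0 ≤ Real.log (x / 2) := Real.log_nonneg (by
        rw [le_div_iff₀ (by norm_num : (0:ℝ) < 2)]; linarith)
      have inv1 : 0 ≤ (Real.log x)⁻¹ := inv_nonneg.mpr hlogx0.le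
      have t1 : 2 * C₀ * ((Real.log 2)⁻¹ - (Real.log x)⁻¹) ≤ 2 * C₀ / Real.log 2 := by
        rw [div_eq_mul_inv]
        have h0 : 0 ≤ 2 * C₀ * (Real.log x)⁻¹ :=
          mul_nonneg (by linarith : (0:ℝ) ≤ 2 * C₀) inv1
        linarith
      have t2 : (σ - 1) * κ / Real.log 2 * Real.log (x / 2) ≤ A * κ / Real.log 2 := by
        have h4 : (σ - 1) * Real.log (x / 2) ≤ A :=
          le_trans (mul_le_mul_of_nonneg_left hlogx2 hσ1) hσlog
        have h5 : ((σ - 1) * Real.log (x / 2)) * κ ≤ A * κ :=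
          mul_le_mul_of_nonneg_right h4 hκ.le
        rw [div_mul_eq_mul_div, div_le_div_iff_of_pos_right hlog2]
        linarith [h5]
      linarith
    exact h1.trans h2
  calc |f x * S x + ∫ t in Set.Ioc (2:ℝ) x, (-(deriv f t * S t) - G t)|
      ≤ |f x * S x| + |∫ t in Set.Ioc (2:ℝ) x, (-(deriv f t * S t) - G t)| := abs_add_le _ _
    _ ≤ κ / Real.log 2 + C₀ / Real.log 2 ^ 2 + 2 * C₀ / Real.log 2 + A * κ / Real.log 2 := by
        linarith

end AuxiliaryLemmas
end

section
/- For any function f : ℕ → ℝ≥0 supported on squarefree numbers, any multiplicative a : ℕ → ℂ, any N ≥ 1, any σ > 0 and any α > 0 (Rankin's trick): ∑_{k ≤ N} f(k)|a(k)|²/k^σ · ∑_{m > N/k, gcd(m,k)=1} f(m)²|a(m)|² ≤ N^{-α} · ∑_{k} f(k)|a(k)|²·k^{α-σ} · ∏_{p ∤ k}(1 + p^α·f(p)²|a(p)|²), provided all the sums and products converge; in particular it is ≤ N^{-α}·∏_p (1 + (f(p)² + f(p)/p^σ)·p^α·|a(p)|²) when f and a are multiplicative with f supported on squarefree numbers and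 a(1)=1. -/
open Finset

section RankinAux

variable {ι : Type*}

private lemma one_le_prod_real {h : ι → ℝ} (h1 : ∀ i, 1 ≤ h i) (s : Finset ι) :
    1 ≤ ∏ i ∈ s, h i := by
  calc (1:ℝ) = ∏ _i ∈ s, (1:ℝ) := by simp
  _ ≤ ∏ i ∈ s, h i := Finset.prod_le_prod (by simp) (fun i _ => h1 i)

private lemma prod_le_tprod_real {h : ι → ℝ} (h1 : ∀ i, 1 ≤ h i) (hm : Multipliable h)
    (s : Finset ι) : ∏ i ∈ s, h i ≤ ∏' i, h i := by
  classical
  refine ge_of_tendsto hm.hasProd ?_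
  rw [SummationFilter.unconditional_filter, Filter.eventually_atTop]
  refine ⟨s, fun t hst => ?_⟩
  rw [← Finset.prod_sdiff hst]
  exact le_mul_of_one_le_left (le_trans zero_le_one (one_le_prod_real h1 s))
    (one_le_prod_real h1 _)

private lemma one_le_tprod_real {h : ι → ℝ} (h1 : ∀ i, 1 ≤ h i) : 1 ≤ ∏' i, h i := by
  by_cases hm : Multipliable h
  · simpa using prod_le_tprod_real h1 hm ∅
  · rw [tprod_eq_one_of_not_multipliable hm]

private lemma tprod_le_tprod_real {h g : ι → ℝ} (h0 : ∀ i, 0 ≤ h i) (hle : ∀ i, h i ≤ g i)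
    (hm : Multipliable h) (hg : Multipliable g) : ∏' i, h i ≤ ∏' i, g i :=
  le_of_tendsto_of_tendsto' hm.hasProd hg.hasProd
    (fun s => Finset.prod_le_prod (fun i _ => h0 i) (fun i _ => hle i))

private lemma multipliable_mulIndicator_real {h : ι → ℝ} (h1 : ∀ i, 1 ≤ h i)
    (hm : Multipliable h) (s : Set ι) : Multipliable (s.mulIndicator h) := by
  classical
  have hg1 : ∀ i, 1 ≤ s.mulIndicator h i := by
    intro i
    by_cases hi : i ∈ s
    · rw [Set.mulIndicator_of_mem hi]; exact h1 i
    · rw [Set.mulIndicator_of_notMem hi]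
  have hgle : ∀ i, s.mulIndicator h i ≤ h i := by
    intro i
    by_cases hi : i ∈ s
    · rw [Set.mulIndicator_of_mem hi]
    · rw [Set.mulIndicator_of_notMem hi]; exact h1 i
  have mono : Monotone (fun t : Finset ι => ∏ i ∈ t, s.mulIndicator h i) := by
    intro t t' htt'
    simp only
    rw [← Finset.prod_sdiff htt']
    exact le_mul_of_one_le_left (le_trans zero_le_one (one_le_prod_real hg1 t))
      (one_le_prod_real hg1 _)
  have bdd : BddAbove (Set.range fun t : Finset ι => ∏ i ∈ t, s.mulIndicator h i) := by
    refine ⟨∏' i, h i, ?_⟩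
    rintro x ⟨t, rfl⟩
    calc ∏ i ∈ t, s.mulIndicator h i ≤ ∏ i ∈ t, h i :=
          Finset.prod_le_prod (fun i _ => le_trans zero_le_one (hg1 i)) (fun i _ => hgle i)
    _ ≤ ∏' i, h i := prod_le_tprod_real h1 hm t
  exact ⟨_, tendsto_atTop_ciSup mono bdd⟩

private lemma tprod_split_real (h : ℕ → ℝ) (h1 : ∀ i, 1 ≤ h i) (hm : Multipliable h)
    (T : Finset ℕ) :
    ∏' n, h n = (∏ n ∈ T, h n) * ∏' n, Set.mulIndicator ((↑T : Set ℕ)ᶜ) h n := by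
  have hv : Multipliable (Set.mulIndicator ((↑T : Set ℕ)ᶜ) h) :=
    multipliable_mulIndicator_real h1 hm _
  have hu : HasProd (Set.mulIndicator (↑T : Set ℕ) h) (∏ n ∈ T, h n) := by
    have h1 : ∀ n ∉ T, Set.mulIndicator (↑T : Set ℕ) h n = 1 := fun n hn =>
      Set.mulIndicator_of_notMem (by simpa using hn) h
    have := hasProd_prod_of_ne_finset_one (L := SummationFilter.unconditional ℕ) h1
    have he : ∏ n ∈ T, Set.mulIndicator (↑T : Set ℕ) h n = ∏ n ∈ T, h n :=
      Finset.prod_congr rfl fun n hn => Set.mulIndicator_of_mem (by simpa using hn) h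
    rwa [he] at this
  have huv : (fun n => Set.mulIndicator (↑T : Set ℕ) h n *
      Set.mulIndicator ((↑T : Set ℕ)ᶜ) h n) = h := by
    funext n
    by_cases hn : n ∈ T
    · rw [Set.mulIndicator_of_mem (by simpa using hn) h,
        Set.mulIndicator_of_notMem (by simpa using hn) h, mul_one]
    · rw [Set.mulIndicator_of_notMem (by simpa using hn) h,
        Set.mulIndicator_of_mem (by simpa using hn) h, one_mul]
  have := hu.mul hv.hasProd
  rw [huv] at this
  exact this.tprod_eq

private lemma mult_prod_primes {M : Type*} [CommMonoid M] (h : ℕ → M) (h1 : h 1 = 1)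
    (hm : ∀ m n : ℕ, Nat.Coprime m n → h (m * n) = h m * h n) :
    ∀ S : Finset ℕ, (∀ p ∈ S, Nat.Prime p) → h (∏ p ∈ S, p) = ∏ p ∈ S, h p := by
  intro S
  induction S using Finset.induction_on with
  | empty => simp [h1]
  | @insert p S hpS ih =>
    intro hS
    have hp : Nat.Prime p := hS p (mem_insert_self _ _)
    have hco : Nat.Coprime p (∏ q ∈ S, q) := by
      refine Nat.Coprime.prod_right fun q hq => ?_
      exact (Nat.coprime_primes hp (hS q (mem_insert_of_mem hq))).mpr
        (fun hpq => hpS (hpq ▸ hq))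
    rw [Finset.prod_insert hpS, Finset.prod_insert hpS, hm _ _ hco,
      ih (fun q hq => hS q (mem_insert_of_mem hq))]

private lemma mult_on_squarefree {M : Type*} [CommMonoid M] (h : ℕ → M) (h1 : h 1 = 1)
    (hm : ∀ m n : ℕ, Nat.Coprime m n → h (m * n) = h m * h n) {n : ℕ} (hn : Squarefree n) :
    h n = ∏ p ∈ n.primeFactors, h p := by
  conv_lhs => rw [← Nat.prod_primeFactors_of_squarefree hn]
  exact mult_prod_primes h h1 hm _ (fun p hp => Nat.prime_of_mem_primeFactors hp)

private lemma key_sum_le_prod (A B : ℕ → ℝ) (hA : ∀ p, 0 ≤ A p) (hB : ∀ p, 0 ≤ B p)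
    (K T : Finset ℕ) (hKsq : ∀ k ∈ K, Squarefree k) (hKT : ∀ k ∈ K, k.primeFactors ⊆ T) :
    ∑ k ∈ K, (∏ p ∈ k.primeFactors, B p) * ∏ p ∈ T \ k.primeFactors, A p
      ≤ ∏ p ∈ T, (B p + A p) := by
  classical
  rw [Finset.prod_add]
  have hinj : ∀ x ∈ K, ∀ y ∈ K, x.primeFactors = y.primeFactors → x = y := by
    intro x hx y hy hxy
    rw [← Nat.prod_primeFactors_of_squarefree (hKsq x hx),
      ← Nat.prod_primeFactors_of_squarefree (hKsq y hy), hxy]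
  have himg : ∑ S ∈ K.image Nat.primeFactors, (∏ p ∈ S, B p) * ∏ p ∈ T \ S, A p
      = ∑ k ∈ K, (∏ p ∈ k.primeFactors, B p) * ∏ p ∈ T \ k.primeFactors, A p :=
    Finset.sum_image hinj
  rw [← himg]
  refine Finset.sum_le_sum_of_subset_of_nonneg ?_ (fun S _ _ => ?_)
  · intro S hS
    rw [Finset.mem_image] at hS
    obtain ⟨k, hk, rfl⟩ := hS
    exact Finset.mem_powerset.mpr (hKT k hk)
  · exact mul_nonneg (Finset.prod_nonneg fun p _ => hB p)
      (Finset.prod_nonneg fun p _ => hA p)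

end RankinAux

theorem rankin_trick (f : ℕ → ℝ) (a : ℕ → ℂ) (N : ℕ) (σ α : ℝ)
    (hN : 1 ≤ N) (hσ : 0 < σ) (hα : 0 < α)
    (hf_nonneg : ∀ n, 0 ≤ f n)
    (hf_sqfree : ∀ n : ℕ, ¬Squarefree n → f n = 0)
    (hf_mult : f 1 = 1 ∧ ∀ m n : ℕ, Nat.Coprime m n → f (m * n) = f m * f n)
    (ha_mult : a 1 = 1 ∧ ∀ m n : ℕ, Nat.Coprime m n → a (m * n) = a m * a n)
    (hsum : ∀ k : ℕ, Summable (fun m : {m : ℕ // (N : ℝ) / k < (m : ℝ) ∧ Nat.Coprime m k} =>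
      (f m) ^ 2 * (‖a m‖) ^ 2))
    (hprod : ∀ k : ℕ, Multipliable (fun p : {p : ℕ // p.Prime ∧ ¬ p ∣ k} =>
      1 + ((p : ℕ) : ℝ) ^ α * (f p) ^ 2 * (‖a p‖) ^ 2))
    (hsum2 : Summable (fun k : ℕ => f k * (‖a k‖) ^ 2 * (k : ℝ) ^ (α - σ) *
      ∏' p : {p : ℕ // p.Prime ∧ ¬ p ∣ k},
        (1 + ((p : ℕ) : ℝ) ^ α * (f p) ^ 2 * (‖a p‖) ^ 2)))
    (hprod2 : Multipliable (fun p : {p : ℕ // p.Prime} =>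
      1 + ((f p) ^ 2 + f p / ((p : ℕ) : ℝ) ^ σ) * ((p : ℕ) : ℝ) ^ α *
        (‖a p‖) ^ 2)) :
    (∑ k ∈ Finset.Icc 1 N, f k * (‖a k‖) ^ 2 / (k : ℝ) ^ σ *
        ∑' m : {m : ℕ // (N : ℝ) / k < (m : ℝ) ∧ Nat.Coprime m k},
          (f m) ^ 2 * (‖a m‖) ^ 2)
      ≤ (N : ℝ) ^ (-α) * ∑' k : ℕ, f k * (‖a k‖) ^ 2 * (k : ℝ) ^ (α - σ) *
          ∏' p : {p : ℕ // p.Prime ∧ ¬ p ∣ k},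
            (1 + ((p : ℕ) : ℝ) ^ α * (f p) ^ 2 * (‖a p‖) ^ 2) ∧
    (N : ℝ) ^ (-α) * (∑' k : ℕ, f k * (‖a k‖) ^ 2 * (k : ℝ) ^ (α - σ) *
          ∏' p : {p : ℕ // p.Prime ∧ ¬ p ∣ k},
            (1 + ((p : ℕ) : ℝ) ^ α * (f p) ^ 2 * (‖a p‖) ^ 2))
      ≤ (N : ℝ) ^ (-α) * ∏' p : {p : ℕ // p.Prime},
          (1 + ((f p) ^ 2 + f p / ((p : ℕ) : ℝ) ^ σ) * ((p : ℕ) : ℝ) ^ α *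
            (‖a p‖) ^ 2) := by
  classical
  obtain ⟨hf1, hfm⟩ := hf_mult
  obtain ⟨ha1, ham⟩ := ha_mult
  -- abbreviations
  set w : ℕ → ℝ := fun n => ‖a n‖ ^ 2 with hw_def
  have hw_nonneg : ∀ n, 0 ≤ w n := fun n => sq_nonneg _
  have hw1 : w 1 = 1 := by simp [hw_def, ha1]
  have hwm : ∀ m n : ℕ, Nat.Coprime m n → w (m * n) = w m * w n := by
    intro m n hco
    simp only [hw_def, ham m n hco, norm_mul, mul_pow]
  set A : ℕ → ℝ := fun n => 1 + (n : ℝ) ^ α * f n ^ 2 * w n with hA_def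
  set b : ℕ → ℝ := fun n => f n * w n * (n : ℝ) ^ (α - σ) with hb_def
  set G : ℕ → ℝ := fun n => 1 + (f n ^ 2 + f n / (n : ℝ) ^ σ) * (n : ℝ) ^ α * w n with hG_def
  set g : ℕ → ℝ := fun n => (n : ℝ) ^ α * f n ^ 2 * w n with hg_def
  have hg_nonneg : ∀ n, 0 ≤ g n := fun n =>
    mul_nonneg (mul_nonneg (Real.rpow_nonneg (Nat.cast_nonneg n) α) (sq_nonneg _)) (hw_nonneg n)
  have hA1 : ∀ n, 1 ≤ A n := fun n => le_add_of_nonneg_right (hg_nonneg n)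
  have hA_nonneg : ∀ n, 0 ≤ A n := fun n => le_trans zero_le_one (hA1 n)
  have hb_nonneg : ∀ n, 0 ≤ b n := fun n =>
    mul_nonneg (mul_nonneg (hf_nonneg n) (hw_nonneg n)) (Real.rpow_nonneg (Nat.cast_nonneg n) _)
  have hG1 : ∀ n, 1 ≤ G n := by
    intro n
    refine le_add_of_nonneg_right ?_
    refine mul_nonneg (mul_nonneg ?_ (Real.rpow_nonneg (Nat.cast_nonneg n) α)) (hw_nonneg n)
    exact add_nonneg (sq_nonneg _)
      (div_nonneg (hf_nonneg n) (Real.rpow_nonneg (Nat.cast_nonneg n) σ))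
  have hAleG : ∀ n, A n ≤ G n := by
    intro n
    have hterm : 0 ≤ f n / (n : ℝ) ^ σ * (n : ℝ) ^ α * w n :=
      mul_nonneg (mul_nonneg
        (div_nonneg (hf_nonneg n) (Real.rpow_nonneg (Nat.cast_nonneg n) σ))
        (Real.rpow_nonneg (Nat.cast_nonneg n) α)) (hw_nonneg n)
    have heq : G n = A n + f n / (n : ℝ) ^ σ * (n : ℝ) ^ α * w n := by
      simp only [hG_def, hA_def]; ring
    rw [heq]
    exact le_add_of_nonneg_right hterm
  -- multiplicativity of g and b
  have hgm : ∀ m n : ℕ, Nat.Coprime m n → g (m * n) = g m * g n := by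
    intro m n hco
    have hc : ((m * n : ℕ) : ℝ) ^ α = (m : ℝ) ^ α * (n : ℝ) ^ α := by
      push_cast
      exact Real.mul_rpow (Nat.cast_nonneg m) (Nat.cast_nonneg n)
    simp only [hg_def, hc, hfm m n hco, hwm m n hco]; ring
  have hg1 : g 1 = 1 := by simp [hg_def, hf1, hw1]
  have hbm : ∀ m n : ℕ, Nat.Coprime m n → b (m * n) = b m * b n := by
    intro m n hco
    have hc : ((m * n : ℕ) : ℝ) ^ (α - σ) = (m : ℝ) ^ (α - σ) * (n : ℝ) ^ (α - σ) := by
      push_cast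
      exact Real.mul_rpow (Nat.cast_nonneg m) (Nat.cast_nonneg n)
    simp only [hb_def, hc, hfm m n hco, hwm m n hco]; ring
  have hb1 : b 1 = 1 := by simp [hb_def, hf1, hw1]
  -- indicator versions of the products
  set 𝒜 : ℕ → ℕ → ℝ := fun k => Set.mulIndicator {n : ℕ | n.Prime ∧ ¬ n ∣ k} A with h𝒜_def
  set 𝒢 : ℕ → ℝ := Set.mulIndicator {n : ℕ | n.Prime} G with h𝒢_def
  have h𝒜1 : ∀ k n, 1 ≤ 𝒜 k n := by
    intro k n
    by_cases hn : n ∈ {n : ℕ | n.Prime ∧ ¬ n ∣ k}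
    · simp only [h𝒜_def]
      rw [Set.mulIndicator_of_mem hn]; exact hA1 n
    · simp only [h𝒜_def]
      rw [Set.mulIndicator_of_notMem hn]
  have h𝒢1 : ∀ n, 1 ≤ 𝒢 n := by
    intro n
    by_cases hn : n ∈ {n : ℕ | n.Prime}
    · simp only [h𝒢_def]
      rw [Set.mulIndicator_of_mem hn]; exact hG1 n
    · simp only [h𝒢_def]
      rw [Set.mulIndicator_of_notMem hn]
  have h𝒜le𝒢 : ∀ k n, 𝒜 k n ≤ 𝒢 n := by
    intro k n
    by_cases hn : n ∈ {n : ℕ | n.Prime ∧ ¬ n ∣ k}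
    · simp only [h𝒜_def, h𝒢_def]
      rw [Set.mulIndicator_of_mem hn, Set.mulIndicator_of_mem (show n ∈ {n : ℕ | n.Prime} from hn.1)]
      exact hAleG n
    · simp only [h𝒜_def]
      rw [Set.mulIndicator_of_notMem hn]; exact h𝒢1 n
  have h𝒜mult : ∀ k, Multipliable (𝒜 k) := fun k =>
    multipliable_subtype_iff_mulIndicator.mp (hprod k)
  have h𝒢mult : Multipliable 𝒢 :=
    multipliable_subtype_iff_mulIndicator.mp hprod2
  have hP : ∀ k : ℕ, (∏' p : {p : ℕ // p.Prime ∧ ¬ p ∣ k},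
      (1 + ((p : ℕ) : ℝ) ^ α * (f p) ^ 2 * (‖a p‖) ^ 2)) = ∏' n, 𝒜 k n :=
    fun k => tprod_subtype {n : ℕ | n.Prime ∧ ¬ n ∣ k} A
  have hY : (∏' p : {p : ℕ // p.Prime},
      (1 + ((f p) ^ 2 + f p / ((p : ℕ) : ℝ) ^ σ) * ((p : ℕ) : ℝ) ^ α *
        (‖a p‖) ^ 2)) = ∏' n, 𝒢 n :=
    tprod_subtype {n : ℕ | n.Prime} G
  have hP1 : ∀ k, 1 ≤ ∏' n, 𝒜 k n := fun k => one_le_tprod_real (h𝒜1 k)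
  have hNpos : (0 : ℝ) < N := by exact_mod_cast Nat.lt_of_lt_of_le Nat.zero_lt_one hN
  have hNα_nonneg : 0 ≤ (N : ℝ) ^ (-α) := Real.rpow_nonneg (Nat.cast_nonneg N) _
  -- nonnegativity of the summand of hsum2
  have ht_nonneg : ∀ k : ℕ, 0 ≤ f k * (‖a k‖) ^ 2 * (k : ℝ) ^ (α - σ) *
      ∏' p : {p : ℕ // p.Prime ∧ ¬ p ∣ k},
        (1 + ((p : ℕ) : ℝ) ^ α * (f p) ^ 2 * (‖a p‖) ^ 2) := by
    intro k
    rw [hP k]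
    exact mul_nonneg (hb_nonneg k) (le_trans zero_le_one (hP1 k))
  constructor
  · -- Part 1
    -- inner bound for each k
    have inner : ∀ k : ℕ, 1 ≤ k → k ≤ N →
        (∑' m : {m : ℕ // (N : ℝ) / k < (m : ℝ) ∧ Nat.Coprime m k},
          (f m) ^ 2 * (‖a m‖) ^ 2)
        ≤ ((k : ℝ) / N) ^ α * ∏' n, 𝒜 k n := by
      intro k hk1 hkN
      have hkpos : (0 : ℝ) < k := by exact_mod_cast hk1
      refine Summable.tsum_le_of_sum_le (hsum k) (fun F => ?_)
      have step1 : ∑ m ∈ F, (f m) ^ 2 * (‖a (m : ℕ)‖) ^ 2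
          ≤ ((k : ℝ) / N) ^ α * ∑ m ∈ F, g (m : ℕ) := by
        rw [Finset.mul_sum]
        refine Finset.sum_le_sum fun m _ => ?_
        have hm1 : (1 : ℝ) ≤ ((m : ℕ) : ℝ) * ((k : ℝ) / N) := by
          have h1 : (N : ℝ) < ((m : ℕ) : ℝ) * k := (div_lt_iff₀ hkpos).mp m.2.1
          rw [← mul_div_assoc]
          exact (one_le_div hNpos).mpr h1.le
        have h2 : (1 : ℝ) ≤ ((m : ℕ) : ℝ) ^ α * ((k : ℝ) / N) ^ α := by
          rw [← Real.mul_rpow (Nat.cast_nonneg _) (div_nonneg hkpos.le hNpos.le)]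
          calc (1 : ℝ) = (1 : ℝ) ^ α := (Real.one_rpow α).symm
          _ ≤ (((m : ℕ) : ℝ) * ((k : ℝ) / N)) ^ α :=
              Real.rpow_le_rpow zero_le_one hm1 hα.le
        calc (f m) ^ 2 * (‖a (m : ℕ)‖) ^ 2
            = 1 * ((f m) ^ 2 * w (m : ℕ)) := by rw [one_mul]
        _ ≤ (((m : ℕ) : ℝ) ^ α * ((k : ℝ) / N) ^ α) * ((f m) ^ 2 * w (m : ℕ)) :=
            mul_le_mul_of_nonneg_right h2 (mul_nonneg (sq_nonneg _) (hw_nonneg _))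
        _ = ((k : ℝ) / N) ^ α * g (m : ℕ) := by simp only [hg_def]; ring
      refine le_trans step1 (mul_le_mul_of_nonneg_left ?_
        (Real.rpow_nonneg (div_nonneg hkpos.le hNpos.le) α))
      -- ∑ g ≤ ∏' 𝒜 k
      set F0 : Finset ℕ := F.image Subtype.val with hF0_def
      set F' : Finset ℕ := F0.filter Squarefree with hF'_def
      set T : Finset ℕ := F'.biUnion Nat.primeFactors with hT_def
      have hF0prop : ∀ n ∈ F0, Nat.Coprime n k := by
        intro n hn
        rw [hF0_def, Finset.mem_image] at hn
        obtain ⟨m, _, rfl⟩ := hn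
        exact m.2.2
      have hstep : ∑ m ∈ F, g (m : ℕ) = ∑ n ∈ F0, g n := by
        rw [hF0_def]
        exact (Finset.sum_image (fun x _ y _ h => Subtype.ext h)).symm
      have hstep2 : ∑ n ∈ F', g n = ∑ n ∈ F0, g n := by
        refine Finset.sum_filter_of_ne (fun n _ hne => ?_)
        by_contra hsq
        exact hne (by simp [hg_def, hf_sqfree n hsq])
      have hTprop : ∀ p ∈ T, p.Prime ∧ ¬ p ∣ k := by
        intro p hp
        rw [hT_def, Finset.mem_biUnion] at hp
        obtain ⟨n, hn, hpn⟩ := hp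
        have hprime := Nat.prime_of_mem_primeFactors hpn
        have hdvd : p ∣ n := Nat.dvd_of_mem_primeFactors hpn
        refine ⟨hprime, fun hpk => ?_⟩
        have hco : Nat.Coprime n k := hF0prop n (Finset.mem_of_mem_filter n hn)
        have hp1 : p ∣ Nat.gcd n k := Nat.dvd_gcd hdvd hpk
        rw [Nat.Coprime] at hco
        rw [hco] at hp1
        exact hprime.ne_one (Nat.dvd_one.mp hp1)
      have hkey : ∑ n ∈ F', g n ≤ ∏ p ∈ T, (g p + (fun _ => (1:ℝ)) p) := by
        have h1 : ∀ n ∈ F', (∏ p ∈ n.primeFactors, g p) * ∏ p ∈ T \ n.primeFactors,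
            (fun _ => (1:ℝ)) p = g n := by
          intro n hn
          have hsq : Squarefree n := (Finset.mem_filter.mp hn).2
          rw [Finset.prod_const_one, mul_one, ← mult_on_squarefree g hg1 hgm hsq]
        calc ∑ n ∈ F', g n
            = ∑ n ∈ F', (∏ p ∈ n.primeFactors, g p) * ∏ p ∈ T \ n.primeFactors,
              (fun _ => (1:ℝ)) p := (Finset.sum_congr rfl h1).symm
        _ ≤ ∏ p ∈ T, (g p + (fun _ => (1:ℝ)) p) :=
            key_sum_le_prod (fun _ => (1:ℝ)) g (fun _ => zero_le_one) hg_nonneg F' T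
              (fun n hn => (Finset.mem_filter.mp hn).2)
              (fun n hn => Finset.subset_biUnion_of_mem Nat.primeFactors hn)
      have hTA : ∏ p ∈ T, (g p + (fun _ => (1:ℝ)) p) = ∏ p ∈ T, 𝒜 k p := by
        refine Finset.prod_congr rfl fun p hp => ?_
        simp only [h𝒜_def]
        rw [Set.mulIndicator_of_mem (show p ∈ {n : ℕ | n.Prime ∧ ¬ n ∣ k} from hTprop p hp)]
        simp only [hA_def]; ring
      calc ∑ m ∈ F, g (m : ℕ) = ∑ n ∈ F', g n := by rw [hstep, hstep2]
      _ ≤ ∏ p ∈ T, (g p + (fun _ => (1:ℝ)) p) := hkey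
      _ = ∏ p ∈ T, 𝒜 k p := hTA
      _ ≤ ∏' n, 𝒜 k n := prod_le_tprod_real (h𝒜1 k) (h𝒜mult k) T
    -- outer estimate
    calc (∑ k ∈ Finset.Icc 1 N, f k * (‖a k‖) ^ 2 / (k : ℝ) ^ σ *
        ∑' m : {m : ℕ // (N : ℝ) / k < (m : ℝ) ∧ Nat.Coprime m k},
          (f m) ^ 2 * (‖a m‖) ^ 2)
        ≤ ∑ k ∈ Finset.Icc 1 N, (N : ℝ) ^ (-α) *
            (f k * (‖a k‖) ^ 2 * (k : ℝ) ^ (α - σ) * ∏' n, 𝒜 k n) := by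
          refine Finset.sum_le_sum fun k hk => ?_
          obtain ⟨hk1, hkN⟩ := Finset.mem_Icc.mp hk
          have hkpos : (0 : ℝ) < k := by exact_mod_cast hk1
          have hq_nonneg : 0 ≤ f k * (‖a k‖) ^ 2 / (k : ℝ) ^ σ :=
            div_nonneg (mul_nonneg (hf_nonneg k) (hw_nonneg k))
              (Real.rpow_nonneg (Nat.cast_nonneg k) σ)
          refine le_trans (mul_le_mul_of_nonneg_left (inner k hk1 hkN) hq_nonneg) (le_of_eq ?_)
          have e1 : ((k : ℝ) / N) ^ α = (k : ℝ) ^ α / (N : ℝ) ^ α :=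
            Real.div_rpow (Nat.cast_nonneg k) (Nat.cast_nonneg N) α
          have e2 : (k : ℝ) ^ (α - σ) = (k : ℝ) ^ α / (k : ℝ) ^ σ := Real.rpow_sub hkpos α σ
          have e3 : (N : ℝ) ^ (-α) = ((N : ℝ) ^ α)⁻¹ :=
            Real.rpow_neg (Nat.cast_nonneg N) α
          have hkσ : (k : ℝ) ^ σ ≠ 0 := (Real.rpow_pos_of_pos hkpos σ).ne'
          have hNα : (N : ℝ) ^ α ≠ 0 := (Real.rpow_pos_of_pos hNpos α).ne'
          rw [e1, e2, e3]
          field_simp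
      _ = (N : ℝ) ^ (-α) * ∑ k ∈ Finset.Icc 1 N,
            (f k * (‖a k‖) ^ 2 * (k : ℝ) ^ (α - σ) * ∏' n, 𝒜 k n) :=
          (Finset.mul_sum _ _ _).symm
      _ ≤ (N : ℝ) ^ (-α) * ∑' k : ℕ, f k * (‖a k‖) ^ 2 * (k : ℝ) ^ (α - σ) *
          ∏' p : {p : ℕ // p.Prime ∧ ¬ p ∣ k},
            (1 + ((p : ℕ) : ℝ) ^ α * (f p) ^ 2 * (‖a p‖) ^ 2) := by
          refine mul_le_mul_of_nonneg_left ?_ hNα_nonneg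
          have : ∀ k ∈ Finset.Icc 1 N,
              f k * (‖a k‖) ^ 2 * (k : ℝ) ^ (α - σ) * ∏' n, 𝒜 k n =
              f k * (‖a k‖) ^ 2 * (k : ℝ) ^ (α - σ) *
                ∏' p : {p : ℕ // p.Prime ∧ ¬ p ∣ k},
                  (1 + ((p : ℕ) : ℝ) ^ α * (f p) ^ 2 * (‖a p‖) ^ 2) :=
            fun k _ => by rw [hP k]
          rw [Finset.sum_congr rfl this]
          exact Summable.sum_le_tsum (Finset.Icc 1 N) (fun k _ => ht_nonneg k) hsum2
  · -- Part 2
    refine mul_le_mul_of_nonneg_left ?_ hNα_nonneg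
    rw [hY]
    refine Summable.tsum_le_of_sum_le hsum2 (fun K => ?_)
    set K' : Finset ℕ := K.filter Squarefree with hK'_def
    set T : Finset ℕ := K'.biUnion Nat.primeFactors with hT_def
    have hK'sq : ∀ k ∈ K', Squarefree k := fun k hk => (Finset.mem_filter.mp hk).2
    have hTprime : ∀ p ∈ T, p.Prime := by
      intro p hp
      rw [hT_def, Finset.mem_biUnion] at hp
      obtain ⟨n, _, hpn⟩ := hp
      exact Nat.prime_of_mem_primeFactors hpn
    set v : ℕ → ℝ := Set.mulIndicator ((↑T : Set ℕ)ᶜ) 𝒢 with hv_def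
    set C : ℝ := ∏' n, v n with hC_def
    have hv1 : ∀ n, 1 ≤ v n := by
      intro n
      by_cases hn : n ∈ ((↑T : Set ℕ)ᶜ)
      · rw [hv_def]; rw [Set.mulIndicator_of_mem hn]; exact h𝒢1 n
      · rw [hv_def]; rw [Set.mulIndicator_of_notMem hn]
    have hC1 : 1 ≤ C := one_le_tprod_real hv1
    have hvmult : Multipliable v := multipliable_mulIndicator_real h𝒢1 h𝒢mult _
    have hsplitG : ∏' n, 𝒢 n = (∏ n ∈ T, 𝒢 n) * C := tprod_split_real 𝒢 h𝒢1 h𝒢mult T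
    -- reduce sum to squarefree k
    have hreduce : ∑ k ∈ K, (f k * (‖a k‖) ^ 2 * (k : ℝ) ^ (α - σ) *
        ∏' p : {p : ℕ // p.Prime ∧ ¬ p ∣ k},
          (1 + ((p : ℕ) : ℝ) ^ α * (f p) ^ 2 * (‖a p‖) ^ 2))
        = ∑ k ∈ K', (f k * (‖a k‖) ^ 2 * (k : ℝ) ^ (α - σ) *
        ∏' p : {p : ℕ // p.Prime ∧ ¬ p ∣ k},
          (1 + ((p : ℕ) : ℝ) ^ α * (f p) ^ 2 * (‖a p‖) ^ 2)) := by
      refine (Finset.sum_filter_of_ne (fun k _ hne => ?_)).symm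
      by_contra hsq
      exact hne (by simp [hf_sqfree k hsq])
    rw [hreduce]
    -- per-k bound
    have hperk : ∀ k ∈ K', f k * (‖a k‖) ^ 2 * (k : ℝ) ^ (α - σ) *
        (∏' p : {p : ℕ // p.Prime ∧ ¬ p ∣ k},
          (1 + ((p : ℕ) : ℝ) ^ α * (f p) ^ 2 * (‖a p‖) ^ 2))
        ≤ ((∏ p ∈ k.primeFactors, b p) * ∏ p ∈ T \ k.primeFactors, A p) * C := by
      intro k hk
      have hsq := hK'sq k hk
      have hk0 : k ≠ 0 := hsq.ne_zero
      have hpfT : k.primeFactors ⊆ T := by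
        rw [hT_def]; exact Finset.subset_biUnion_of_mem Nat.primeFactors hk
      set vk : ℕ → ℝ := Set.mulIndicator ((↑T : Set ℕ)ᶜ) (𝒜 k) with hvk_def
      have hvkmult : Multipliable vk :=
        multipliable_mulIndicator_real (h𝒜1 k) (h𝒜mult k) _
      have hsplitA : ∏' n, 𝒜 k n = (∏ n ∈ T, 𝒜 k n) * ∏' n, vk n :=
        tprod_split_real (𝒜 k) (h𝒜1 k) (h𝒜mult k) T
      have hCkC : ∏' n, vk n ≤ C := by
        rw [hC_def]
        refine tprod_le_tprod_real (fun n => ?_) (fun n => ?_) hvkmult hvmult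
        · by_cases hn : n ∈ ((↑T : Set ℕ)ᶜ)
          · rw [hvk_def]; rw [Set.mulIndicator_of_mem hn]
            exact le_trans zero_le_one (h𝒜1 k n)
          · rw [hvk_def]; rw [Set.mulIndicator_of_notMem hn]; exact zero_le_one
        · by_cases hn : n ∈ ((↑T : Set ℕ)ᶜ)
          · rw [hvk_def, hv_def]
            rw [Set.mulIndicator_of_mem hn, Set.mulIndicator_of_mem hn]
            exact h𝒜le𝒢 k n
          · rw [hvk_def, hv_def]
            rw [Set.mulIndicator_of_notMem hn, Set.mulIndicator_of_notMem hn]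
      have hTA : ∏ n ∈ T, 𝒜 k n = ∏ p ∈ T \ k.primeFactors, A p := by
        rw [← Finset.prod_sdiff hpfT]
        have h1 : ∏ p ∈ k.primeFactors, 𝒜 k p = 1 := by
          refine Finset.prod_eq_one fun p hp => ?_
          simp only [h𝒜_def]
          refine Set.mulIndicator_of_notMem ?_ A
          simp only [Set.mem_setOf_eq, not_and, not_not]
          exact fun _ => Nat.dvd_of_mem_primeFactors hp
        have h2 : ∏ p ∈ T \ k.primeFactors, 𝒜 k p = ∏ p ∈ T \ k.primeFactors, A p := by
          refine Finset.prod_congr rfl fun p hp => ?_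
          obtain ⟨hpT, hpnf⟩ := Finset.mem_sdiff.mp hp
          have hprime := hTprime p hpT
          have hnd : ¬ p ∣ k := fun hdvd =>
            hpnf (Nat.mem_primeFactors.mpr ⟨hprime, hdvd, hk0⟩)
          simp only [h𝒜_def]
          rw [Set.mulIndicator_of_mem (show p ∈ {n : ℕ | n.Prime ∧ ¬ n ∣ k} from ⟨hprime, hnd⟩)]
        rw [h2, h1, mul_one]
      have hbk : f k * (‖a k‖) ^ 2 * (k : ℝ) ^ (α - σ) =
          ∏ p ∈ k.primeFactors, b p := mult_on_squarefree b hb1 hbm hsq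
      rw [hP k, hsplitA, hTA, hbk, ← mul_assoc]
      refine mul_le_mul_of_nonneg_left hCkC ?_
      exact mul_nonneg (Finset.prod_nonneg fun p _ => hb_nonneg p)
        (Finset.prod_nonneg fun p _ => hA_nonneg p)
    calc ∑ k ∈ K', (f k * (‖a k‖) ^ 2 * (k : ℝ) ^ (α - σ) *
        ∏' p : {p : ℕ // p.Prime ∧ ¬ p ∣ k},
          (1 + ((p : ℕ) : ℝ) ^ α * (f p) ^ 2 * (‖a p‖) ^ 2))
        ≤ ∑ k ∈ K', ((∏ p ∈ k.primeFactors, b p) * ∏ p ∈ T \ k.primeFactors, A p) * C :=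
          Finset.sum_le_sum hperk
      _ = (∑ k ∈ K', (∏ p ∈ k.primeFactors, b p) * ∏ p ∈ T \ k.primeFactors, A p) * C :=
          (Finset.sum_mul _ _ _).symm
      _ ≤ (∏ p ∈ T, (b p + A p)) * C := by
          refine mul_le_mul_of_nonneg_right ?_ (le_trans zero_le_one hC1)
          exact key_sum_le_prod A b hA_nonneg hb_nonneg K' T hK'sq
            (fun k hk => by rw [hT_def]; exact Finset.subset_biUnion_of_mem Nat.primeFactors hk)
      _ = (∏ n ∈ T, 𝒢 n) * C := by
          refine congrArg (· * C) (Finset.prod_congr rfl fun p hp => ?_)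
          have hprime := hTprime p hp
          have hppos : (0 : ℝ) < p := by exact_mod_cast hprime.pos
          simp only [h𝒢_def]
          rw [Set.mulIndicator_of_mem (show p ∈ {n : ℕ | n.Prime} from hprime)]
          have e2 : (p : ℝ) ^ (α - σ) = (p : ℝ) ^ α / (p : ℝ) ^ σ := Real.rpow_sub hppos α σ
          simp only [hb_def, hA_def, hG_def, e2]
          ring
      _ = ∏' n, 𝒢 n := hsplitG.symm
end

section
/- Let σ > 1/2, β ∈ (1-σ, σ), L ≥ 2, and define the multiplicative function f by f(p^k) = min(1, (L/p^k)^β). Then for every positive integer n, ∑_{k | n} (1/(k^σ · f(k))) ≤ exp( L^{-β}·∑_{p | n} 1/(p^{σ-β} - 1) + ∑_{p | n} 1/(p^σ - 1) ), where the divisor sum can be restricted to divisors k with f(k) ≠ 0 and interpreted via the Euler-product factorization over primes dividing n. -/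
open Finset Real

/-- The multiplicative function determined by `f (p^k) = min 1 ((L / p^k)^β)` on prime
powers, extended multiplicatively via the prime factorization. -/
noncomputable def resonatorF (L β : ℝ) (n : ℕ) : ℝ :=
  ∏ p ∈ n.primeFactors, min 1 ((L / (p ^ (n.factorization p) : ℕ)) ^ β)

lemma resonatorF_pos {L : ℝ} (hL : 0 < L) (β : ℝ) (k : ℕ) : 0 < resonatorF L β k := by
  apply Finset.prod_pos
  intro p hp
  have hp2 := (Nat.prime_of_mem_primeFactors hp).pos
  have : (0:ℝ) < ((p ^ (k.factorization p) : ℕ) : ℝ) := by positivity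
  exact lt_min one_pos (Real.rpow_pos_of_pos (div_pos hL this) β)

lemma resonatorF_one (L β : ℝ) : resonatorF L β 1 = 1 := by simp [resonatorF]

lemma resonatorF_mul {L β : ℝ} {m n : ℕ} (hm : m ≠ 0) (hn : n ≠ 0) (h : Nat.Coprime m n) :
    resonatorF L β (m * n) = resonatorF L β m * resonatorF L β n := by
  have hd := Nat.Coprime.disjoint_primeFactors h
  unfold resonatorF
  rw [Nat.primeFactors_mul hm hn, Finset.prod_union hd]
  congr 1
  · refine Finset.prod_congr rfl fun p hp => ?_
    have h0 : n.factorization p = 0 :=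
      Finsupp.notMem_support_iff.mp (by
        rw [Nat.support_factorization]; exact Finset.disjoint_left.mp hd hp)
    rw [Nat.factorization_mul hm hn]
    simp [h0]
  · refine Finset.prod_congr rfl fun p hp => ?_
    have h0 : m.factorization p = 0 :=
      Finsupp.notMem_support_iff.mp (by
        rw [Nat.support_factorization]; exact Finset.disjoint_right.mp hd hp)
    rw [Nat.factorization_mul hm hn]
    simp [h0]

lemma resonatorF_prime_pow {L β : ℝ} {p : ℕ} (hp : p.Prime) {j : ℕ} (hj : j ≠ 0) :
    resonatorF L β (p ^ j) = min 1 ((L / ((p:ℝ) ^ j)) ^ β) := by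
  unfold resonatorF
  rw [Nat.primeFactors_prime_pow hj hp, Finset.prod_singleton, hp.factorization_pow]
  simp

-- helper: (P^j)^c = (P^c)^j for P ≥ 0
lemma pow_rpow_comm {P : ℝ} (hP : 0 ≤ P) (j : ℕ) (c : ℝ) : ((P ^ j) : ℝ) ^ c = (P ^ c) ^ j := by
  rw [← Real.rpow_natCast P j, ← Real.rpow_mul hP, mul_comm, Real.rpow_mul hP, Real.rpow_natCast]

lemma geom_tail_le {r : ℝ} (h0 : 0 ≤ r) (h1 : r < 1) (a : ℕ) :
    ∑ i ∈ Finset.range a, r ^ (i + 1) ≤ r / (1 - r) := by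
  have h1r : 0 < 1 - r := by linarith
  have hge : (∑ i ∈ Finset.range a, r ^ i) * (1 - r) = 1 - r ^ a := by
    have := geom_sum_mul r a
    linarith [this]
  have hsum : ∑ i ∈ Finset.range a, r ^ i ≤ 1 / (1 - r) := by
    rw [le_div_iff₀ h1r, hge]
    have : (0:ℝ) ≤ r ^ a := pow_nonneg h0 a
    linarith
  calc ∑ i ∈ Finset.range a, r ^ (i + 1)
      = r * ∑ i ∈ Finset.range a, r ^ i := by
        rw [Finset.mul_sum]; exact Finset.sum_congr rfl fun i _ => by ring
    _ ≤ r * (1 / (1 - r)) := mul_le_mul_of_nonneg_left hsum h0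
    _ = r / (1 - r) := by ring

lemma one_div_min_le {A x : ℝ} (hA : 0 < A) (hx : 0 < x) :
    1 / (A * min 1 x) ≤ 1 / A + 1 / (A * x) := by
  rcases min_cases 1 x with ⟨h, _⟩ | ⟨h, _⟩ <;> rw [h]
  · rw [mul_one]
    have : 0 < 1 / (A * x) := by positivity
    linarith
  · have : 0 < 1 / A := by positivity
    linarith

lemma g_prime_pow_le {σ β L : ℝ} (hL : 0 < L) {p : ℕ} (hp : p.Prime) {j : ℕ} (hj : j ≠ 0) :
    1 / (((p ^ j : ℕ) : ℝ) ^ σ * resonatorF L β (p ^ j))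
      ≤ ((p : ℝ) ^ (-σ)) ^ j + L ^ (-β) * ((p : ℝ) ^ (β - σ)) ^ j := by
  have hP : (0:ℝ) < (p:ℝ) := by exact_mod_cast hp.pos
  have hQ : (0:ℝ) < (p:ℝ) ^ j := by positivity
  have hA : (0:ℝ) < ((p:ℝ) ^ j) ^ σ := Real.rpow_pos_of_pos hQ σ
  have hx : (0:ℝ) < (L / ((p:ℝ) ^ j)) ^ β := Real.rpow_pos_of_pos (by positivity) β
  rw [resonatorF_prime_pow hp hj]
  push_cast
  refine le_trans (one_div_min_le hA hx) ?_
  have e1 : 1 / (((p:ℝ) ^ j) ^ σ) = ((p : ℝ) ^ (-σ)) ^ j := by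
    rw [← pow_rpow_comm hP.le, Real.rpow_neg hQ.le, one_div]
  have e2 : 1 / (((p:ℝ) ^ j) ^ σ * (L / ((p:ℝ) ^ j)) ^ β)
      = L ^ (-β) * ((p : ℝ) ^ (β - σ)) ^ j := by
    rw [← pow_rpow_comm hP.le j (β - σ)]
    rw [Real.div_rpow hL.le hQ.le]
    have h3 : ((p:ℝ) ^ j) ^ σ * (L ^ β / ((p:ℝ) ^ j) ^ β)
        = L ^ β * ((p:ℝ) ^ j) ^ (σ - β) := by
      rw [Real.rpow_sub hQ]; ring
    rw [h3, show β - σ = -(σ - β) by ring, Real.rpow_neg hL.le, Real.rpow_neg hQ.le,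
      one_div, mul_inv]
  rw [e1, e2]

lemma factor_bound {σ β L : ℝ} (hσ : 1/2 < σ) (hβ₁ : 1 - σ < β) (hβ₂ : β < σ)
    (hL : 2 ≤ L) {p : ℕ} (hp : p.Prime) (a : ℕ) :
    ∑ i ∈ Finset.range (a + 1), 1 / (((p ^ i : ℕ) : ℝ) ^ σ * resonatorF L β (p ^ i))
      ≤ Real.exp (L ^ (-β) * (1 / ((p : ℝ) ^ (σ - β) - 1)) + 1 / ((p : ℝ) ^ σ - 1)) := by
  have hL0 : (0:ℝ) < L := by linarith
  have hσ0 : 0 < σ := by linarith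
  have hσβ : 0 < σ - β := by linarith
  have hp1 : (1:ℝ) < (p:ℝ) := by exact_mod_cast hp.one_lt
  have hP0 : (0:ℝ) < (p:ℝ) := by linarith
  set r : ℝ := (p:ℝ) ^ (-σ) with hr
  set s : ℝ := (p:ℝ) ^ (β - σ) with hs
  have hr0 : 0 ≤ r := (Real.rpow_pos_of_pos hP0 _).le
  have hs0 : 0 ≤ s := (Real.rpow_pos_of_pos hP0 _).le
  have hr1 : r < 1 := Real.rpow_lt_one_of_one_lt_of_neg hp1 (by linarith)
  have hs1 : s < 1 := Real.rpow_lt_one_of_one_lt_of_neg hp1 (by linarith)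
  have hPσ : 1 < (p:ℝ) ^ σ := (Real.one_lt_rpow_iff_of_pos hP0).mpr (Or.inl ⟨hp1, hσ0⟩)
  have hPσβ : 1 < (p:ℝ) ^ (σ - β) := (Real.one_lt_rpow_iff_of_pos hP0).mpr (Or.inl ⟨hp1, hσβ⟩)
  have hrq : r / (1 - r) = 1 / ((p:ℝ) ^ σ - 1) := by
    rw [hr, Real.rpow_neg hP0.le]
    rw [div_eq_div_iff (by rw [← Real.rpow_neg hP0.le]; have := Real.rpow_lt_one_of_one_lt_of_neg hp1 (neg_neg_of_pos hσ0); linarith) (by linarith)]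
    field_simp
  have hsq : s / (1 - s) = 1 / ((p:ℝ) ^ (σ - β) - 1) := by
    rw [hs, show β - σ = -(σ - β) by ring, Real.rpow_neg hP0.le]
    rw [div_eq_div_iff (by rw [← Real.rpow_neg hP0.le]; have := Real.rpow_lt_one_of_one_lt_of_neg hp1 (neg_neg_of_pos hσβ); linarith) (by linarith)]
    field_simp
  have hLβ : (0:ℝ) ≤ L ^ (-β) := (Real.rpow_pos_of_pos hL0 _).le
  have step1 : ∑ i ∈ Finset.range (a + 1), 1 / (((p ^ i : ℕ) : ℝ) ^ σ * resonatorF L β (p ^ i))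
      ≤ 1 + (L ^ (-β) * (1 / ((p : ℝ) ^ (σ - β) - 1)) + 1 / ((p : ℝ) ^ σ - 1)) := by
    rw [Finset.sum_range_succ']
    have h0 : 1 / (((p ^ 0 : ℕ) : ℝ) ^ σ * resonatorF L β (p ^ 0)) = 1 := by
      simp [resonatorF_one]
    rw [h0]
    have hterm : ∀ i ∈ Finset.range a,
        1 / (((p ^ (i + 1) : ℕ) : ℝ) ^ σ * resonatorF L β (p ^ (i + 1)))
          ≤ r ^ (i + 1) + L ^ (-β) * s ^ (i + 1) :=
      fun i _ => g_prime_pow_le hL0 hp (Nat.succ_ne_zero i)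
    have hsum2 : ∑ i ∈ Finset.range a,
        1 / (((p ^ (i + 1) : ℕ) : ℝ) ^ σ * resonatorF L β (p ^ (i + 1)))
        ≤ L ^ (-β) * (1 / ((p : ℝ) ^ (σ - β) - 1)) + 1 / ((p : ℝ) ^ σ - 1) := by
      calc ∑ i ∈ Finset.range a, 1 / (((p ^ (i + 1) : ℕ) : ℝ) ^ σ * resonatorF L β (p ^ (i + 1)))
          ≤ ∑ i ∈ Finset.range a, (r ^ (i + 1) + L ^ (-β) * s ^ (i + 1)) :=
            Finset.sum_le_sum hterm
        _ = (∑ i ∈ Finset.range a, r ^ (i + 1)) + L ^ (-β) * ∑ i ∈ Finset.range a, s ^ (i + 1) := by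
            rw [Finset.sum_add_distrib, Finset.mul_sum]
        _ ≤ r / (1 - r) + L ^ (-β) * (s / (1 - s)) := by
            have := geom_tail_le hr0 hr1 a
            have := geom_tail_le hs0 hs1 a
            have := mul_le_mul_of_nonneg_left (geom_tail_le hs0 hs1 a) hLβ
            linarith [geom_tail_le hr0 hr1 a]
        _ = L ^ (-β) * (1 / ((p : ℝ) ^ (σ - β) - 1)) + 1 / ((p : ℝ) ^ σ - 1) := by
            rw [hrq, hsq]; ring
    linarith
  refine le_trans step1 ?_
  have := Real.add_one_le_exp (L ^ (-β) * (1 / ((p : ℝ) ^ (σ - β) - 1)) + 1 / ((p : ℝ) ^ σ - 1))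
  linarith

theorem divisor_sum_bound (σ β L : ℝ) (hσ : 1/2 < σ) (hβ₁ : 1 - σ < β) (hβ₂ : β < σ)
    (hL : 2 ≤ L) (n : ℕ) (hn : 0 < n) :
    (∑ k ∈ n.divisors.filter (fun k => resonatorF L β k ≠ 0),
        1 / ((k : ℝ) ^ σ * resonatorF L β k))
      ≤ Real.exp (L ^ (-β) * (∑ p ∈ n.primeFactors, 1 / ((p : ℝ) ^ (σ - β) - 1))
          + ∑ p ∈ n.primeFactors, 1 / ((p : ℝ) ^ σ - 1)) := by
  have hL0 : (0:ℝ) < L := by linarith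
  have hfil : n.divisors.filter (fun k => resonatorF L β k ≠ 0) = n.divisors :=
    Finset.filter_true_of_mem fun k _ => (resonatorF_pos hL0 β k).ne'
  rw [hfil]
  -- the arithmetic function g
  set gA : ArithmeticFunction ℝ :=
    ⟨fun k => if k = 0 then 0 else 1 / ((k : ℝ) ^ σ * resonatorF L β k), by simp⟩ with hgA_def
  have hgA : ∀ k : ℕ, k ≠ 0 → gA k = 1 / ((k : ℝ) ^ σ * resonatorF L β k) :=
    fun k hk => if_neg hk
  have hmult : gA.IsMultiplicative := by
    rw [ArithmeticFunction.IsMultiplicative.iff_ne_zero]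
    refine ⟨?_, ?_⟩
    · rw [hgA 1 one_ne_zero]; simp [resonatorF_one]
    · intro m k hm hk hmk
      rw [hgA _ (mul_ne_zero hm hk), hgA _ hm, hgA _ hk]
      rw [Nat.cast_mul, Real.mul_rpow (Nat.cast_nonneg m) (Nat.cast_nonneg k),
        resonatorF_mul hm hk hmk, one_div, one_div, one_div, ← mul_inv]
      congr 1; ring
  have hzmult : ((ArithmeticFunction.zeta : ArithmeticFunction ℕ) * gA
      : ArithmeticFunction ℝ).IsMultiplicative :=
    ArithmeticFunction.isMultiplicative_zeta.natCast.mul hmult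
  have key : ∀ m : ℕ, ((ArithmeticFunction.zeta : ArithmeticFunction ℕ) * gA
      : ArithmeticFunction ℝ) m = ∑ k ∈ m.divisors, 1 / ((k : ℝ) ^ σ * resonatorF L β k) := by
    intro m
    rw [ArithmeticFunction.coe_zeta_mul_apply]
    exact Finset.sum_congr rfl fun k hk => hgA k (Nat.pos_of_mem_divisors hk).ne'
  rw [← key n]
  rw [hzmult.multiplicative_factorization _ hn.ne']
  rw [Nat.prod_factorization_eq_prod_primeFactors]
  calc ∏ p ∈ n.primeFactors, ((ArithmeticFunction.zeta : ArithmeticFunction ℕ) * gA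
        : ArithmeticFunction ℝ) (p ^ n.factorization p)
      ≤ ∏ p ∈ n.primeFactors,
          Real.exp (L ^ (-β) * (1 / ((p : ℝ) ^ (σ - β) - 1)) + 1 / ((p : ℝ) ^ σ - 1)) := by
        refine Finset.prod_le_prod (fun p hp => ?_) (fun p hp => ?_)
        · rw [key]
          refine Finset.sum_nonneg fun k hk => ?_
          have hk0 : 0 < k := Nat.pos_of_mem_divisors hk
          have := resonatorF_pos hL0 β k
          positivity
        · have hpp := Nat.prime_of_mem_primeFactors hp
          rw [key, Nat.sum_divisors_prime_pow hpp]
          exact factor_bound hσ hβ₁ hβ₂ hL hpp _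
    _ = Real.exp (L ^ (-β) * (∑ p ∈ n.primeFactors, 1 / ((p : ℝ) ^ (σ - β) - 1))
          + ∑ p ∈ n.primeFactors, 1 / ((p : ℝ) ^ σ - 1)) := by
        rw [← Real.exp_sum]
        congr 1
        rw [Finset.sum_add_distrib, Finset.mul_sum]
end
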